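/- Let (X_i)_{i≥1} be i.i.d. Bernoulli(p) random variables with p ∈ (c, 1−c) for some constant c ∈ (0, 1/2), and let q ∈ (0, p). Then the probability that for all n ≥ 1 the average (1/n)·Σ_{i=1}^n X_i is at least q is at least c·(p − q). -/

import Mathlib

open Real

lemma stmt5_aux_u_pow (q ε : ℝ) (hq1 : q < 1) (hε0 : 0 ≤ ε) (hε1 : ε < 1) :
    ((1 - ε) ^ ((1:ℝ)/(1-q))) ^ ((1:ℝ) - q) = 1 - ε := by
  have h1ε : (0:ℝ) ≤ 1 - ε := by linarith
  rw [← Real.rpow_mul h1ε, one_div, inv_mul_cancel₀ (by linarith : (1:ℝ) - q ≠ 0),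
    Real.rpow_one]

lemma stmt5_mean_le (p q : ℝ) (hp1 : p < 1) (hq0 : 0 < q) (hqp : q < p) :
    p * (1 - (p - q)) + (1 - p) * (((1 - (p-q)) ^ ((1:ℝ)/(1-q))) ^ (-q : ℝ)) ≤ 1 := by
  set ε := p - q with hε
  have hε0 : 0 < ε := by simp [hε]; linarith
  have hε1 : ε < 1 := by simp [hε]; linarith
  have hq1 : q < 1 := lt_trans hqp hp1
  have h1ε : 0 < 1 - ε := by linarith
  have h1q : 0 < 1 - q := by linarith
  set u := (1 - ε) ^ ((1:ℝ)/(1-q)) with hu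
  have hu0 : 0 < u := Real.rpow_pos_of_pos h1ε _
  set s := q / (1 - q) with hs
  have hs0 : 0 ≤ s := div_nonneg hq0.le h1q.le
  have hsq : s * (1 - q) = q := div_mul_cancel₀ _ (ne_of_gt h1q)
  set γ := (1 - ε) ^ s with hγ
  have hγ0 : 0 < γ := Real.rpow_pos_of_pos h1ε _
  have huq : u ^ (-q : ℝ) = γ⁻¹ := by
    have hexpo : (1:ℝ)/(1-q) * (-q) = -s := by field_simp; linarith [hsq]
    rw [hu, ← Real.rpow_mul h1ε.le, hexpo, Real.rpow_neg h1ε.le, hγ]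
  have hlog : -(ε / (1 - ε)) ≤ Real.log (1 - ε) := by
    have h := Real.log_le_sub_one_of_pos (inv_pos.mpr h1ε)
    rw [Real.log_inv] at h
    have h2 : (1 - ε)⁻¹ - 1 = ε / (1 - ε) := by field_simp; ring
    linarith [h, h2]
  have hexp : 1 + s * Real.log (1 - ε) ≤ γ := by
    rw [hγ, Real.rpow_def_of_pos h1ε]
    have h3 := Real.add_one_le_exp (s * Real.log (1 - ε))
    rw [mul_comm (Real.log (1 - ε)) s]
    linarith
  have hL : -ε ≤ (1 - ε) * Real.log (1 - ε) := by
    have h2 := mul_le_mul_of_nonneg_right hlog h1ε.le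
    have h5 : ε/(1-ε)*(1-ε) = ε := div_mul_cancel₀ _ (ne_of_gt h1ε)
    nlinarith [h2, h5]
  have hγlow : (1 - ε) - s * ε ≤ γ * (1 - ε) := by
    nlinarith [mul_le_mul_of_nonneg_right hexp h1ε.le, mul_le_mul_of_nonneg_left hL hs0]
  have hp0 : 0 < p := lt_trans hq0 hqp
  have hkey : (1 - p) ≤ ((1 - p) + p * ε) * γ := by
    nlinarith [mul_le_mul_of_nonneg_left hγlow
        (show (0:ℝ) ≤ ((1-p) + p*ε)*(1-q) by
          nlinarith [mul_pos (mul_pos hp0 hε0) h1q, mul_nonneg (by linarith : (0:ℝ) ≤ 1-p) h1q.le]),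
      hsq, mul_pos hγ0 h1ε, sq_nonneg ε, mul_pos hε0 hε0]
  have hB : (1 - p) * γ⁻¹ ≤ (1 - p) + p * ε := by
    rw [← div_eq_mul_inv, div_le_iff₀ hγ0]
    linarith
  rw [huq]
  linarith


open MeasureTheory ProbabilityTheory Finset

lemma stmt5_ville {Ω : Type*} {m : MeasurableSpace Ω} {P : Measure Ω}
    [IsProbabilityMeasure P] (X : ℕ → Ω → ℝ) (hmeas : ∀ i, Measurable (X i))
    (hindep : iIndepFun X P)
    (g : ℝ → ℝ) (hg : Measurable g) (A B : ℝ) (hA : 0 < A) (hAB : A ≤ B)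
    (hgr : ∀ x, g x = A ∨ g x = B)
    (hmean : ∀ i, ∫ ω, g (X i ω) ∂P ≤ 1)
    (lam : ℝ) (hlam : 1 < lam) :
    P {ω | X 1 ω = 1 ∧ ∃ n, lam ≤ ∏ i ∈ Finset.range n, g (X (i + 2) ω)}
      ≤ ENNReal.ofReal ((P {ω | X 1 ω = 1}).toReal / lam) := by
  classical
  set T : ℕ → Ω → ℝ := fun n ω => ∏ i ∈ Finset.range n, g (X (i + 2) ω) with hT
  have hgpos : ∀ x, 0 < g x := fun x => by
    rcases hgr x with h | h <;> rw [h] <;> linarith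
  have hgB : ∀ x, g x ≤ B := fun x => by
    rcases hgr x with h | h <;> rw [h] <;> linarith
  have hTmeas : ∀ n, Measurable (T n) := fun n =>
    Finset.measurable_prod _ (fun i _ => hg.comp (hmeas (i + 2)))
  have hTpos : ∀ n ω, 0 < T n ω := fun n ω =>
    Finset.prod_pos (fun i _ => hgpos _)
  have hTleB : ∀ n ω, T n ω ≤ B ^ n := by
    intro n ω
    calc T n ω ≤ ∏ _i ∈ Finset.range n, B :=
        Finset.prod_le_prod (fun i _ => (hgpos _).le) (fun i _ => hgB _)
    _ = B ^ n := by rw [Finset.prod_const, Finset.card_range]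
  have hTint : ∀ n, Integrable (T n) P := by
    intro n
    refine (integrable_const (B ^ n)).mono' (hTmeas n).aestronglyMeasurable ?_
    filter_upwards with ω
    rw [Real.norm_eq_abs, abs_of_pos (hTpos n ω)]
    exact hTleB n ω
  have hX1meas : MeasurableSet {ω | X 1 ω = 1} := hmeas 1 (measurableSet_singleton 1)
  -- the stopped sets
  set Cs : ℕ → Set Ω := fun n => {ω | X 1 ω = 1 ∧ ∀ k ≤ n, T k ω < lam} with hCs
  set As : ℕ → Set Ω := fun n =>
    {ω | X 1 ω = 1 ∧ (∀ k < n, T k ω < lam) ∧ lam ≤ T n ω} with hAs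
  have hCmeas : ∀ n, MeasurableSet (Cs n) := by
    intro n
    have : Cs n = {ω | X 1 ω = 1} ∩ ⋂ (k : ℕ) (_ : k ≤ n), {ω | T k ω < lam} := by
      ext ω; simp [hCs, Set.mem_iInter]
    rw [this]
    exact hX1meas.inter (MeasurableSet.iInter fun k => MeasurableSet.iInter fun _ =>
      measurableSet_lt (hTmeas k) measurable_const)
  have hAmeas : ∀ n, MeasurableSet (As n) := by
    intro n
    have : As n = ({ω | X 1 ω = 1} ∩ ⋂ (k : ℕ) (_ : k < n), {ω | T k ω < lam}) ∩
        {ω | lam ≤ T n ω} := by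
      ext ω; simp [hAs, Set.mem_iInter, and_assoc]
    rw [this]
    exact ((hX1meas.inter (MeasurableSet.iInter fun k => MeasurableSet.iInter fun _ =>
      measurableSet_lt (hTmeas k) measurable_const)).inter
      (measurableSet_le measurable_const (hTmeas n)))
  -- independence step
  have hmul : ∀ n, ∫ ω in Cs n, T (n+1) ω ∂P
      = (∫ ω in Cs n, T n ω ∂P) * (∫ ω, g (X (n+2) ω) ∂P) := by
    intro n
    set S : Finset ℕ := Finset.range (n+2) with hS
    have h12 : (1:ℕ) ∈ S := by simp [hS]
    set r : ((i : S) → ℝ) → (ℕ → ℝ) := fun v j => if h : j ∈ S then v ⟨j, h⟩ else 0 with hr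
    have hrmeas : Measurable r := by
      refine measurable_pi_lambda _ (fun j => ?_)
      by_cases h : j ∈ S
      · simpa [hr, h] using measurable_pi_apply (⟨j, h⟩ : S)
      · simpa [hr, h] using measurable_const
    set Ty : ℕ → (ℕ → ℝ) → ℝ := fun k y => ∏ i ∈ Finset.range k, g (y (i+2)) with hTy
    have hTymeas : ∀ k, Measurable (Ty k) := fun k =>
      Finset.measurable_prod _ (fun i _ => hg.comp (measurable_pi_apply (i+2)))
    set Cy : Set (ℕ → ℝ) := {y | y 1 = 1 ∧ ∀ k ≤ n, Ty k y < lam} with hCy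
    have hCymeas : MeasurableSet Cy := by
      have hCyeq : Cy = {y : ℕ → ℝ | y 1 = 1} ∩ ⋂ (k) (_ : k ≤ n), {y | Ty k y < lam} := by
        ext y; simp [hCy, Set.mem_iInter]
      rw [hCyeq]
      exact ((measurable_pi_apply 1) (measurableSet_singleton 1)).inter
        (MeasurableSet.iInter fun k => MeasurableSet.iInter fun _ =>
          measurableSet_lt (hTymeas k) measurable_const)
    set Φ : (ℕ → ℝ) → ℝ := Set.indicator Cy (Ty n) with hΦ
    have hΦmeas : Measurable Φ := (hTymeas n).indicator hCymeas
    set ψ : ((i : ({n+2} : Finset ℕ)) → ℝ) → ℝ :=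
      fun v => g (v ⟨n+2, Finset.mem_singleton_self _⟩) with hψ
    have hψmeas : Measurable ψ := hg.comp (measurable_pi_apply _)
    have hdisjS : Disjoint S ({n+2} : Finset ℕ) := by
      simp [hS, Finset.disjoint_singleton_right]
    have hIF := (hindep.indepFun_finset S {n+2} hdisjS hmeas).comp
      (hΦmeas.comp hrmeas) hψmeas
    have hFeq : (Φ ∘ r) ∘ (fun ω (i : S) => X i ω) = Set.indicator (Cs n) (T n) := by
      funext ω
      have hy : ∀ j (h : j ∈ S), r (fun i : S => X i ω) j = X j ω := fun j h => by
        simp [hr, h]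
      have hTk : ∀ k, k ≤ n → Ty k (r (fun i : S => X i ω)) = T k ω := by
        intro k hk
        refine Finset.prod_congr rfl (fun i hi => ?_)
        have hiS : i + 2 ∈ S := by
          rw [hS, Finset.mem_range]
          have := Finset.mem_range.mp hi
          omega
        rw [hy _ hiS]
      have hmem : r (fun i : S => X i ω) ∈ Cy ↔ ω ∈ Cs n := by
        simp only [hCy, hCs, Set.mem_setOf_eq]
        rw [hy 1 h12]
        constructor
        · rintro ⟨h1, h2⟩
          refine ⟨h1, fun k hk => ?_⟩
          have h3 := h2 k hk
          rwa [hTk k hk] at h3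
        · rintro ⟨h1, h2⟩
          refine ⟨h1, fun k hk => ?_⟩
          rw [hTk k hk]
          exact h2 k hk
      simp only [Function.comp_apply, hΦ, Set.indicator]
      by_cases hω : ω ∈ Cs n
      · rw [if_pos (hmem.mpr hω), if_pos hω, hTk n le_rfl]
      · rw [if_neg (fun hh => hω (hmem.mp hh)), if_neg hω]
    have hGeq : ψ ∘ (fun ω (i : ({n+2} : Finset ℕ)) => X i ω)
        = fun ω => g (X (n+2) ω) := rfl
    rw [hFeq, hGeq] at hIF
    have hFm : Measurable (Set.indicator (Cs n) (T n)) := (hTmeas n).indicator (hCmeas n)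
    have hGm : Measurable (fun ω => g (X (n+2) ω)) := hg.comp (hmeas (n+2))
    have hint := IndepFun.integral_mul_eq_mul_integral hIF
      hFm.aestronglyMeasurable hGm.aestronglyMeasurable
    have hpoint : (Set.indicator (Cs n) (T n)) * (fun ω => g (X (n+2) ω))
        = Set.indicator (Cs n) (T (n+1)) := by
      funext ω
      by_cases hω : ω ∈ Cs n
      · simp only [Pi.mul_apply, Set.indicator_of_mem hω]
        exact (Finset.prod_range_succ _ _).symm
      · simp [Set.indicator_of_notMem hω]
    calc ∫ ω in Cs n, T (n+1) ω ∂P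
        = ∫ ω, Set.indicator (Cs n) (T (n+1)) ω ∂P := (integral_indicator (hCmeas n)).symm
      _ = ∫ ω, ((Set.indicator (Cs n) (T n)) * fun ω => g (X (n+2) ω)) ω ∂P := by
          rw [hpoint]
      _ = (∫ ω, Set.indicator (Cs n) (T n) ω ∂P) * ∫ ω, g (X (n+2) ω) ∂P := hint
      _ = (∫ ω in Cs n, T n ω ∂P) * ∫ ω, g (X (n+2) ω) ∂P := by
          rw [integral_indicator (hCmeas n)]
  -- splitting step
  have hsplit : ∀ n, ∫ ω in Cs n, T (n+1) ω ∂P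
      = (∫ ω in Cs (n+1), T (n+1) ω ∂P) + ∫ ω in As (n+1), T (n+1) ω ∂P := by
    intro n
    have hun : Cs n = Cs (n+1) ∪ As (n+1) := by
      ext ω
      constructor
      · rintro ⟨h1, h2⟩
        rcases lt_or_ge (T (n+1) ω) lam with h | h
        · exact Or.inl ⟨h1, fun k hk => by
            rcases Nat.lt_or_ge k (n+1) with hk' | hk'
            · exact h2 k (Nat.lt_succ_iff.mp hk')
            · have : k = n+1 := le_antisymm hk hk'
              rw [this]; exact h⟩
        · exact Or.inr ⟨h1, fun k hk => h2 k (Nat.lt_succ_iff.mp hk), h⟩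
      · rintro (⟨h1, h2⟩ | ⟨h1, h2, h3⟩)
        · exact ⟨h1, fun k hk => h2 k (le_trans hk (Nat.le_succ n))⟩
        · exact ⟨h1, fun k hk => h2 k (Nat.lt_succ_of_le hk)⟩
    have hdisj : Disjoint (Cs (n+1)) (As (n+1)) := by
      rw [Set.disjoint_left]
      rintro ω ⟨_, h2⟩ ⟨_, _, h3⟩
      exact absurd h3 (not_le.mpr (h2 (n+1) le_rfl))
    rw [hun]
    exact setIntegral_union hdisj (hAmeas (n+1)) ((hTint (n+1)).integrableOn)
      ((hTint (n+1)).integrableOn)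
  -- nonnegativity facts
  have hInonneg : ∀ n, 0 ≤ ∫ ω in Cs n, T n ω ∂P := fun n =>
    setIntegral_nonneg (hCmeas n) (fun ω _ => (hTpos n ω).le)
  have hmean0 : ∀ i, 0 ≤ ∫ ω, g (X i ω) ∂P := fun i =>
    integral_nonneg (fun ω => (hgpos _).le)
  -- the key induction
  have key : ∀ n, (∑ k ∈ Finset.range (n+1), ∫ ω in As k, T k ω ∂P)
      + ∫ ω in Cs n, T n ω ∂P ≤ (P {ω | X 1 ω = 1}).toReal := by
    intro n
    induction n with
    | zero =>
      have hA0 : As 0 = ∅ := by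
        refine Set.eq_empty_iff_forall_notMem.mpr (fun ω hω => ?_)
        obtain ⟨_, _, h3⟩ := hω
        have hT0 : T 0 ω = 1 := by simp [hT]
        rw [hT0] at h3; linarith
      have hC0 : Cs 0 = {ω | X 1 ω = 1} := by
        ext ω
        simp only [hCs, Set.mem_setOf_eq, and_iff_left_iff_imp]
        intro _ k hk
        interval_cases k
        have : T 0 ω = 1 := by simp [hT]
        rw [this]; linarith
      rw [show (0:ℕ)+1 = 1 from rfl, Finset.sum_range_one, hA0, hC0,
        Measure.restrict_empty]
      simp only [integral_zero_measure, zero_add]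
      have hT0 : T 0 = fun _ => (1:ℝ) := by funext ω; simp [hT]
      rw [hT0, setIntegral_const]
      simp
      exact le_rfl
    | succ n ih =>
      have h1 := hmul n
      have h2 := hsplit n
      have h3 : ∫ ω in Cs n, T (n+1) ω ∂P ≤ ∫ ω in Cs n, T n ω ∂P := by
        rw [h1]
        exact mul_le_of_le_one_right (hInonneg n) (hmean (n+2))
      rw [Finset.sum_range_succ]
      linarith [ih]
  -- lower bound each term
  have hlow : ∀ k, lam * (P (As k)).toReal ≤ ∫ ω in As k, T k ω ∂P := by
    intro k
    have := setIntegral_ge_of_const_le (hAmeas k) (measure_ne_top P _)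
      (fun ω hω => hω.2.2) ((hTint k).integrableOn)
    rw [smul_eq_mul, mul_comm] at this
    exact this
  have hsumA : ∀ N, ∑ k ∈ Finset.range N, (P (As k)).toReal
      ≤ (P {ω | X 1 ω = 1}).toReal / lam := by
    intro N
    rw [le_div_iff₀ (by linarith : (0:ℝ) < lam)]
    calc (∑ k ∈ Finset.range N, (P (As k)).toReal) * lam
        = ∑ k ∈ Finset.range N, lam * (P (As k)).toReal := by
          rw [Finset.sum_mul]; congr 1; funext k; ring
      _ ≤ ∑ k ∈ Finset.range N, ∫ ω in As k, T k ω ∂P :=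
          Finset.sum_le_sum (fun k _ => hlow k)
      _ ≤ (P {ω | X 1 ω = 1}).toReal := by
          calc ∑ k ∈ Finset.range N, ∫ ω in As k, T k ω ∂P
              ≤ ∑ k ∈ Finset.range (N+1), ∫ ω in As k, T k ω ∂P := by
                have hnn : 0 ≤ ∫ ω in As N, T N ω ∂P :=
                  setIntegral_nonneg (hAmeas N) (fun ω _ => (hTpos N ω).le)
                rw [Finset.sum_range_succ]
                exact le_add_of_nonneg_right hnn
            _ ≤ (P {ω | X 1 ω = 1}).toReal := by
                have := key N
                linarith [hInonneg N]
  -- the union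
  have hAdisj : Pairwise (Function.onFun Disjoint As) := by
    intro i j hij
    rcases hij.lt_or_gt with h | h
    · show Disjoint (As i) (As j)
      rw [Set.disjoint_left]
      rintro ω ⟨_, _, h3⟩ ⟨_, h5, _⟩
      exact absurd h3 (not_le.mpr (h5 i h))
    · show Disjoint (As i) (As j)
      rw [Set.disjoint_left]
      rintro ω ⟨_, h2, _⟩ ⟨_, _, h6⟩
      exact absurd h6 (not_le.mpr (h2 j h))
  have hsub : {ω | X 1 ω = 1 ∧ ∃ n, lam ≤ ∏ i ∈ Finset.range n, g (X (i + 2) ω)}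
      ⊆ ⋃ n, As n := by
    rintro ω ⟨h1, hex⟩
    have hex' : ∃ n, lam ≤ T n ω := hex
    refine Set.mem_iUnion.mpr ⟨Nat.find hex', h1, ?_, Nat.find_spec hex'⟩
    exact fun k hk => not_le.mp (Nat.find_min hex' hk)
  calc P {ω | X 1 ω = 1 ∧ ∃ n, lam ≤ ∏ i ∈ Finset.range n, g (X (i + 2) ω)}
      ≤ P (⋃ n, As n) := measure_mono hsub
    _ = ∑' n, P (As n) := measure_iUnion hAdisj hAmeas
    _ ≤ ENNReal.ofReal ((P {ω | X 1 ω = 1}).toReal / lam) := by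
        rw [ENNReal.tsum_eq_iSup_sum]
        refine iSup_le (fun s => ?_)
        obtain ⟨N, hN⟩ : ∃ N, s ⊆ Finset.range N := ⟨(s.sup id) + 1, fun x hx =>
          Finset.mem_range.mpr (Nat.lt_succ_of_le (Finset.le_sup (f := id) hx))⟩
        calc ∑ k ∈ s, P (As k) ≤ ∑ k ∈ Finset.range N, P (As k) :=
              Finset.sum_le_sum_of_subset hN
          _ = ENNReal.ofReal (∑ k ∈ Finset.range N, (P (As k)).toReal) := by
              rw [ENNReal.ofReal_sum_of_nonneg (fun k _ => ENNReal.toReal_nonneg)]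
              congr 1; funext k
              rw [ENNReal.ofReal_toReal (measure_ne_top P _)]
          _ ≤ ENNReal.ofReal ((P {ω | X 1 ω = 1}).toReal / lam) :=
              ENNReal.ofReal_le_ofReal (hsumA N)


open MeasureTheory ProbabilityTheory

theorem stmt_5 {Ω : Type*} {m : MeasurableSpace Ω} {P : Measure Ω}
    [IsProbabilityMeasure P] (c p q : ℝ) (hc : 0 < c) (hc' : c < 1/2)
    (hp : p ∈ Set.Ioo c (1 - c)) (hq : q ∈ Set.Ioo 0 p)
    (X : ℕ → Ω → ℝ) (hmeas : ∀ i, Measurable (X i))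
    (hindep : iIndepFun X P)
    (hbern01 : ∀ i, ∀ᵐ ω ∂P, X i ω = 0 ∨ X i ω = 1)
    (hbernp : ∀ i, P {ω | X i ω = 1} = ENNReal.ofReal p) :
    ENNReal.ofReal (c * (p - q)) ≤
      P {ω | ∀ n : ℕ, 1 ≤ n → q ≤ (∑ i ∈ Finset.range n, X (i + 1) ω) / n} := by
  classical
  obtain ⟨hcp, hpc⟩ := hp
  obtain ⟨hq0, hqp⟩ := hq
  have hp0 : 0 < p := lt_trans hc hcp
  have hp1 : p < 1 := by linarith
  have hq1 : q < 1 := lt_trans hqp hp1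
  set ε := p - q with hε
  have hε0 : 0 < ε := by simp [hε]; linarith
  have hε1 : ε < 1 := by simp [hε]; linarith
  have h1ε : 0 < 1 - ε := by linarith
  have h1q : 0 < 1 - q := by linarith
  set u : ℝ := (1 - ε) ^ ((1:ℝ)/(1-q)) with hu
  have hu0 : 0 < u := Real.rpow_pos_of_pos h1ε _
  have hu1 : u < 1 := Real.rpow_lt_one h1ε.le (by linarith) (by positivity)
  have hu1q : u ^ ((1:ℝ) - q) = 1 - ε := stmt5_aux_u_pow q ε hq1 hε0.le hε1
  set A : ℝ := 1 - ε with hA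
  set B : ℝ := u ^ (-q : ℝ) with hB
  have hA0 : 0 < A := h1ε
  have hB1 : 1 < B := by
    rw [hB]
    rw [Real.one_lt_rpow_iff_of_pos hu0]
    exact Or.inr ⟨hu1, by linarith⟩
  have hAB : A ≤ B := by rw [hA]; linarith
  set lam : ℝ := u ^ (q - 1 : ℝ) with hlam
  have hlameq : lam = (1 - ε)⁻¹ := by
    rw [hlam, show (q - 1 : ℝ) = -(1 - q) by ring, Real.rpow_neg hu0.le, hu1q]
  have hlam1 : 1 < lam := by
    rw [hlameq]
    nlinarith [mul_inv_cancel₀ (ne_of_gt h1ε), inv_pos.mpr h1ε,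
      mul_pos hε0 (inv_pos.mpr h1ε)]
  set g : ℝ → ℝ := fun x => if x = 1 then A else B with hg
  have hgmeas : Measurable g :=
    Measurable.ite (measurableSet_eq_fun measurable_id measurable_const)
      measurable_const measurable_const
  have hgr : ∀ x, g x = A ∨ g x = B := fun x => by
    by_cases h : x = 1 <;> simp [hg, h]
  -- the mean condition
  have hmean : ∀ i, ∫ ω, g (X i ω) ∂P ≤ 1 := by
    intro i
    have hXmeas : MeasurableSet {ω | X i ω = 1} := hmeas i (measurableSet_singleton 1)
    have heqg : (fun ω => g (X i ω))
        = fun ω => B + (A - B) * Set.indicator {ω | X i ω = 1} (fun _ => (1:ℝ)) ω := by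
      funext ω
      by_cases h : X i ω = 1
      · simp [hg, h, Set.indicator_of_mem (show ω ∈ {ω | X i ω = 1} from h)]
      · simp [hg, h, Set.indicator_of_notMem (show ω ∉ {ω | X i ω = 1} from h)]
    have hind_int : Integrable (Set.indicator {ω | X i ω = 1} (fun _ => (1:ℝ))) P :=
      (integrable_const (1:ℝ)).indicator hXmeas
    rw [heqg]
    rw [integral_add (integrable_const B) (hind_int.const_mul _)]
    rw [integral_const, integral_const_mul]
    have hone : ∫ ω, Set.indicator {ω | X i ω = 1} (fun _ => (1:ℝ)) ω ∂P
        = (P {ω | X i ω = 1}).toReal := by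
      rw [integral_indicator hXmeas]
      simp
      rfl
    rw [hone, hbernp i, ENNReal.toReal_ofReal hp0.le]
    have hmain := stmt5_mean_le p q hp1 hq0 hqp
    have hcomp : p * A + (1 - p) * B ≤ 1 := by
      rw [hA, hB, hu]; exact hmain
    simp only [measure_univ, probReal_univ, ENNReal.toReal_one, smul_eq_mul, one_mul]
    nlinarith [hcomp]
  -- apply the ville lemma
  have hville := stmt5_ville X hmeas hindep g hgmeas A B hA0 hAB hgr hmean lam hlam1
  have hville' : P {ω | X 1 ω = 1 ∧ ∃ n, lam ≤ ∏ i ∈ Finset.range n, g (X (i + 2) ω)}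
      ≤ ENNReal.ofReal (p * (1 - ε)) := by
    refine le_trans hville (le_of_eq ?_)
    rw [hbernp 1, ENNReal.toReal_ofReal hp0.le, hlameq]
    congr 1
    rw [div_eq_mul_inv, inv_inv]
  -- the good set
  set Good : Set Ω := {ω | ∀ i, X i ω = 0 ∨ X i ω = 1} with hGood
  have hGoodc : P Goodᶜ = 0 := by
    have : Goodᶜ = ⋃ i, {ω | ¬(X i ω = 0 ∨ X i ω = 1)} := by
      ext ω; simp [hGood]
    rw [this]
    refine measure_iUnion_null (fun i => ?_)
    have := hbern01 i
    rwa [ae_iff] at this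
  set E : Set Ω := {ω | ∀ n : ℕ, 1 ≤ n → q ≤ (∑ i ∈ Finset.range n, X (i + 1) ω) / n}
    with hE
  set Bad : Set Ω := {ω | X 1 ω = 1 ∧ ∃ n, lam ≤ ∏ i ∈ Finset.range n, g (X (i + 2) ω)}
    with hBad
  -- inclusion
  have hincl : {ω | X 1 ω = 1} ⊆ (E ∪ Bad) ∪ Goodᶜ := by
    intro ω hX1
    simp only [Set.mem_setOf_eq] at hX1
    by_cases hgood : ω ∈ Good
    swap
    · exact Or.inr hgood
    by_cases hEmem : ω ∈ E
    · exact Or.inl (Or.inl hEmem)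
    left; right
    -- derive T m ≥ lam
    have hTk : ∀ k, (∏ i ∈ Finset.range k, g (X (i+2) ω))
        = u ^ ((∑ i ∈ Finset.range k, X (i+2) ω) - q * k) := by
      intro k
      induction k with
      | zero => simp
      | succ k ih =>
        rw [Finset.prod_range_succ, Finset.sum_range_succ, ih]
        rcases hgood (k+2) with h0 | h1
        · have hgk : g (X (k+2) ω) = B := by
            rw [hg]; simp only [h0]; norm_num
          rw [hgk, hB, ← Real.rpow_add hu0]
          congr 1
          push_cast
          rw [h0]
          ring
        · have hgk : g (X (k+2) ω) = A := by rw [hg]; simp [h1]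
          rw [hgk, ← hu1q, ← Real.rpow_add hu0]
          congr 1
          push_cast
          rw [h1]
          ring
    -- find violation
    simp only [hE, Set.mem_setOf_eq, not_forall] at hEmem
    obtain ⟨n, hn1, hnq⟩ := hEmem
    push_neg at hnq
    have hnpos : (0:ℝ) < (n:ℝ) := by exact_mod_cast hn1
    have hsumlt : (∑ i ∈ Finset.range n, X (i + 1) ω) < q * n := by
      rw [div_lt_iff₀ hnpos] at hnq
      linarith
    obtain ⟨mm, rfl⟩ : ∃ mm, n = mm + 1 := ⟨n - 1, by omega⟩
    have hshift : (∑ i ∈ Finset.range (mm+1), X (i + 1) ω)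
        = (∑ i ∈ Finset.range mm, X (i + 2) ω) + X 1 ω := by
      rw [Finset.sum_range_succ']
    rw [hshift, hX1] at hsumlt
    refine ⟨hX1, mm, ?_⟩
    rw [hTk mm, hlam]
    rw [Real.rpow_le_rpow_left_iff_of_base_lt_one hu0 hu1]
    push_cast at hsumlt ⊢
    linarith
  -- final arithmetic
  have h1 : ENNReal.ofReal p ≤ P E + ENNReal.ofReal (p * (1 - ε)) := by
    calc ENNReal.ofReal p = P {ω | X 1 ω = 1} := (hbernp 1).symm
      _ ≤ P ((E ∪ Bad) ∪ Goodᶜ) := measure_mono hincl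
      _ ≤ P (E ∪ Bad) + P Goodᶜ := measure_union_le _ _
      _ = P (E ∪ Bad) := by rw [hGoodc, add_zero]
      _ ≤ P E + P Bad := measure_union_le _ _
      _ ≤ P E + ENNReal.ofReal (p * (1 - ε)) := add_le_add le_rfl hville'
  have h2 : ENNReal.ofReal p - ENNReal.ofReal (p * (1 - ε)) ≤ P E :=
    tsub_le_iff_right.mpr h1
  rw [← ENNReal.ofReal_sub _ (by nlinarith : (0:ℝ) ≤ p * (1 - ε))] at h2
  refine le_trans (ENNReal.ofReal_le_ofReal ?_) h2
  rw [hε]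
  nlinarith
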